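/- Let E : ℝ → ℝ be monotone on [0, ∞), satisfy the Kneser difference equation E(x+1) = Real.exp (E x) for all x ≥ 0, and tend to +∞ as x → +∞. Then E is transexponential: for every n ∈ ℕ, E(x) > exp^[n](x) for all sufficiently large x, where exp^[n] is the n-fold composition iterate of Real.exp. -/

import Mathlib

open Filter

/-- Any monotone solution of the Kneser difference equation
`E (x + 1) = exp (E x)` tending to `+∞` is transexponential: it eventually
dominates every compositional iterate of `exp`. -/
theorem transexponential_of_kneser (E : ℝ → ℝ)
    (hmono : MonotoneOn E (Set.Ici (0 : ℝ)))
    (hK : ∀ x : ℝ, 0 ≤ x → E (x + 1) = Real.exp (E x))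
    (htop : Tendsto E atTop atTop) :
    ∀ n : ℕ, ∀ᶠ x : ℝ in atTop, Real.exp^[n] x < E x := by
  -- `exp t ≥ 2 t` for `t ≥ 0`
  have hexp2 : ∀ t : ℝ, 0 ≤ t → 2 * t ≤ Real.exp t := by
    intro t ht
    have h1 : t / 2 + 1 ≤ Real.exp (t / 2) := Real.add_one_le_exp _
    have h2 : Real.exp t = Real.exp (t / 2) * Real.exp (t / 2) := by
      rw [← Real.exp_add]; ring_nf
    nlinarith [Real.exp_pos (t / 2), sq_nonneg (t - 2)]
  obtain ⟨M0, hM0⟩ := eventually_atTop.mp (htop.eventually_ge_atTop 2)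
  set M : ℝ := max M0 0 with hMdef
  have hMnn : (0 : ℝ) ≤ M := le_max_right _ _
  have hM : ∀ x, M ≤ x → 2 ≤ E x := fun x hx => hM0 x ((le_max_left _ _).trans hx)
  -- geometric growth of `E` above `M`
  have hgrow : ∀ k : ℕ, ∀ x, M ≤ x → 2 * 2 ^ k ≤ E (x + k) := by
    intro k
    induction k with
    | zero => intro x hx; simpa using hM x hx
    | succ k ih =>
      intro x hx
      have hkn : (0 : ℝ) ≤ (k : ℝ) := Nat.cast_nonneg k
      have hx0 : (0 : ℝ) ≤ x + k := by linarith [hMnn.trans hx]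
      have hih := ih x hx
      have hEpos : (0 : ℝ) ≤ E (x + k) := by nlinarith [pow_pos (zero_lt_two (α := ℝ)) k]
      have heq : E (x + (k + 1 : ℕ)) = Real.exp (E (x + k)) := by
        have h := hK (x + k) hx0
        rw [show ((k + 1 : ℕ) : ℝ) = (k : ℝ) + 1 by push_cast; ring, ← add_assoc, h]
      rw [heq]
      have h2 := hexp2 (E (x + k)) hEpos
      have : (2 : ℝ) * 2 ^ (k + 1) = 2 * (2 * 2 ^ k) := by ring
      nlinarith
  -- iterated functional equation
  have hiter : ∀ k : ℕ, ∀ y : ℝ, 0 ≤ y → E (y + k) = Real.exp^[k] (E y) := by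
    intro k
    induction k with
    | zero => intro y hy; simp
    | succ k ih =>
      intro y hy
      have hkn : (0 : ℝ) ≤ (k : ℝ) := Nat.cast_nonneg k
      have hy0 : (0 : ℝ) ≤ y + k := by linarith
      have h := hK (y + k) hy0
      rw [show ((k + 1 : ℕ) : ℝ) = (k : ℝ) + 1 by push_cast; ring, ← add_assoc, h,
        ih y hy, Function.iterate_succ_apply']
  -- margin: `E y - y → ∞` in a weak form
  have hmargin : ∀ c : ℝ, ∀ᶠ y in atTop, y + c < E y := by
    intro c
    obtain ⟨k, hk⟩ := exists_nat_ge (M + c)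
    rw [eventually_atTop]
    refine ⟨M + k, fun y hy => ?_⟩
    have hyM : M ≤ y := by linarith [Nat.cast_nonneg (α := ℝ) k, hy]
    have hynn : (0 : ℝ) ≤ y := hMnn.trans hyM
    set j : ℕ := ⌊y - M⌋₊ with hjdef
    have hymM : (0 : ℝ) ≤ y - M := by linarith
    have hjle : (j : ℝ) ≤ y - M := Nat.floor_le hymM
    have hjgt : y - M < j + 1 := Nat.lt_floor_add_one _
    have hkj : (k : ℝ) ≤ (j : ℝ) := by
      have : (k : ℝ) ≤ y - M := by linarith
      exact_mod_cast Nat.le_floor (by exact_mod_cast this)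
    have h1 : 2 * 2 ^ j ≤ E (M + j) := hgrow j M le_rfl
    have h2 : E (M + j) ≤ E y := by
      apply hmono (by simp [Set.mem_Ici]; positivity) (Set.mem_Ici.mpr hynn)
      linarith
    have hpow : (j : ℝ) + 1 ≤ 2 ^ j := by
      exact_mod_cast Nat.lt_two_pow_self (n := j)
    nlinarith
  -- main argument
  intro n
  obtain ⟨N, hN⟩ := eventually_atTop.mp (hmargin n)
  rw [eventually_atTop]
  refine ⟨max N 0 + n, fun x hx => ?_⟩
  set y : ℝ := x - n with hydef
  have hyN : N ≤ y := by
    have := le_max_left N 0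
    simp only [hydef]; linarith
  have hynn : (0 : ℝ) ≤ y := by
    have := le_max_right N 0
    simp only [hydef]; linarith
  have hxy : x = y + n := by simp [hydef]
  have hEy : y + n < E y := hN y hyN
  have hEx : E x = Real.exp^[n] (E y) := by rw [hxy]; exact hiter n y hynn
  rw [hEx]
  have hsm : StrictMono (Real.exp^[n]) := Real.exp_strictMono.iterate n
  calc Real.exp^[n] x = Real.exp^[n] (y + n) := by rw [hxy]
    _ < Real.exp^[n] (E y) := hsm hEy
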